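/- Fix reals b, c, d with (b,c,d) ≠ (0,0,0) and d ≥ b². Define m(τ) = τ(|b + 2τc| + √((b + 2τc)² + d)) for τ ≥ 0. Then m is strictly increasing on [0,∞). -/

import Mathlib

open Real

private lemma m_deriv_pos (b c d : ℝ) (hd : d ≥ b^2) (x : ℝ) (hu : b + 2*x*c ≠ 0) :
    0 < deriv (fun τ : ℝ => τ * (|b + 2*τ*c| + Real.sqrt ((b + 2*τ*c)^2 + d))) x := by
  set u : ℝ := b + 2*x*c with hudef
  set S : ℝ := Real.sqrt (u^2 + d) with hSdef
  have hd0 : 0 ≤ d := le_trans (sq_nonneg b) hd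
  have hv : 0 < u^2 + d := by positivity
  have hS : 0 < S := Real.sqrt_pos.mpr hv
  have hS2 : S^2 = u^2 + d := Real.sq_sqrt hv.le
  have hbS : |b| ≤ S := by
    rw [← Real.sqrt_sq_eq_abs]
    exact Real.sqrt_le_sqrt (by nlinarith)
  set σ : ℝ := if 0 < u then 1 else -1 with hσdef
  have hσu : σ * u = |u| := by
    rcases lt_trichotomy u 0 with h | h | h
    · simp [hσdef, not_lt.mpr h.le, abs_of_neg h]
    · exact absurd h hu
    · simp [hσdef, h, abs_of_pos h]
  have hlin : HasDerivAt (fun τ : ℝ => b + 2*τ*c) (2*c) x := by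
    simpa using (((hasDerivAt_id x).const_mul (2:ℝ)).mul_const c).const_add b
  have hsq : HasDerivAt (fun τ : ℝ => (b + 2*τ*c)^2 + d) (2 * u^1 * (2*c)) x :=
    (hlin.pow 2).add_const d
  have hsqrt : HasDerivAt (fun τ : ℝ => Real.sqrt ((b + 2*τ*c)^2 + d))
      (1 / (2 * S) * (2 * u^1 * (2*c))) x := by
    exact (Real.hasDerivAt_sqrt hv.ne').comp x hsq
  have habs : HasDerivAt (fun τ : ℝ => σ * (b + 2*τ*c)) (σ * (2*c)) x := hlin.const_mul σ
  have hg : HasDerivAt (fun τ : ℝ => σ * (b + 2*τ*c) + Real.sqrt ((b + 2*τ*c)^2 + d))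
      (σ * (2*c) + 1 / (2 * S) * (2 * u^1 * (2*c))) x := habs.add hsqrt
  have hprod : HasDerivAt (fun τ : ℝ => τ * (σ * (b + 2*τ*c) + Real.sqrt ((b + 2*τ*c)^2 + d)))
      (1 * (σ * u + S) + x * (σ * (2*c) + 1 / (2 * S) * (2 * u^1 * (2*c)))) x := by
    exact (hasDerivAt_id x).mul hg
  have heq : (fun τ : ℝ => τ * (|b + 2*τ*c| + Real.sqrt ((b + 2*τ*c)^2 + d)))
      =ᶠ[nhds x] (fun τ : ℝ => τ * (σ * (b + 2*τ*c) + Real.sqrt ((b + 2*τ*c)^2 + d))) := by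
    have hcont : Continuous (fun τ : ℝ => σ * (b + 2*τ*c)) := by fun_prop
    have hx0 : 0 < σ * (b + 2*x*c) := by rw [← hudef, hσu]; exact abs_pos.mpr hu
    have hopen : IsOpen {y : ℝ | 0 < σ * (b + 2*y*c)} := isOpen_lt continuous_const hcont
    filter_upwards [hopen.mem_nhds hx0] with y hy
    have : |b + 2*y*c| = σ * (b + 2*y*c) := by
      rcases le_or_gt u 0 with h|h
      · have hσ : σ = -1 := by simp [hσdef, not_lt.mpr h]
        rw [hσ] at hy ⊢
        rw [abs_of_neg (by linarith [hy] : b + 2*y*c < 0)]; ring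
      · have hσ : σ = 1 := by simp [hσdef, h]
        rw [hσ] at hy ⊢
        rw [abs_of_pos (by linarith [hy] : 0 < b + 2*y*c)]; ring
    rw [this]
  have hf : HasDerivAt (fun τ : ℝ => τ * (|b + 2*τ*c| + Real.sqrt ((b + 2*τ*c)^2 + d)))
      (1 * (σ * u + S) + x * (σ * (2*c) + 1 / (2 * S) * (2 * u^1 * (2*c)))) x :=
    hprod.congr_of_eventuallyEq heq
  rw [hf.deriv]
  have he : x * (2*c) = u - b := by rw [hudef]; ring
  have hkey : (1 * (σ * u + S) + x * (σ * (2*c) + 1 / (2 * S) * (2 * u^1 * (2*c)))) * S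
      = (S + |u|) * (S + |u| - σ * b) := by
    have hσσ : σ * σ = 1 := by
      rcases le_or_gt u 0 with h|h
      · simp [hσdef, not_lt.mpr h]
      · simp [hσdef, h]
    rw [← hσu]
    have hinv : 1 / (2 * S) * S = 1/2 := by
      rw [div_mul_eq_mul_div, one_mul, div_eq_iff (by positivity)]; ring
    linear_combination (4*x*u*c) * hinv + (σ*S+u) * he - (u^2 - u*b) * hσσ
  have hu0 : 0 < |u| := abs_pos.mpr hu
  have hσb : σ * b ≤ S := by
    refine le_trans ?_ hbS
    rcases le_or_gt u 0 with h|h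
    · have hσ : σ = -1 := by simp [hσdef, not_lt.mpr h]
      rw [hσ]; simpa using neg_le_abs b
    · have hσ : σ = 1 := by simp [hσdef, h]
      rw [hσ]; simpa using le_abs_self b
  nlinarith [hkey, hu0, hS, hσb]

theorem m_strictMonoOn (b c d : ℝ) (hne : (b, c, d) ≠ (0, 0, 0)) (hd : d ≥ b^2) :
    StrictMonoOn (fun τ : ℝ => τ * (|b + 2*τ*c| + Real.sqrt ((b + 2*τ*c)^2 + d)))
      (Set.Ici 0) := by
  set f : ℝ → ℝ := fun τ : ℝ => τ * (|b + 2*τ*c| + Real.sqrt ((b + 2*τ*c)^2 + d)) with hfdef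
  have hcont : Continuous f := by fun_prop
  by_cases hbc : b = 0 ∧ c = 0
  · obtain ⟨hb, hc⟩ := hbc
    have hd0 : 0 < d := by
      rcases lt_or_eq_of_le (le_trans (sq_nonneg b) hd) with h | h
      · exact h
      · exact absurd (by rw [hb, hc, ← h]) hne
    intro s _ t _ hst
    have hval : ∀ τ : ℝ, f τ = τ * Real.sqrt d := by
      intro τ; simp [hfdef, hb, hc]
    rw [hval s, hval t]
    exact mul_lt_mul_of_pos_right hst (Real.sqrt_pos.mpr hd0)
  · by_cases hc : c = 0
    · have hb : b ≠ 0 := fun h => hbc ⟨h, hc⟩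
      refine strictMonoOn_of_deriv_pos (convex_Ici 0) hcont.continuousOn fun x _ => ?_
      exact m_deriv_pos b c d hd x (by simpa [hc] using hb)
    · set τ₀ : ℝ := -b / (2*c) with hτ₀def
      have hc2 : (2:ℝ)*c ≠ 0 := by simpa using hc
      have key : ∀ x : ℝ, x ≠ τ₀ → b + 2*x*c ≠ 0 := by
        intro x hx h
        apply hx
        rw [hτ₀def, eq_div_iff hc2]
        linear_combination h
      rcases le_or_gt τ₀ 0 with hτ | hτ
      · refine strictMonoOn_of_deriv_pos (convex_Ici 0) hcont.continuousOn fun x hx => ?_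
        rw [interior_Ici] at hx
        exact m_deriv_pos b c d hd x (key x (ne_of_gt (lt_of_le_of_lt hτ hx)))
      · have h1 : StrictMonoOn f (Set.Icc 0 τ₀) := by
          refine strictMonoOn_of_deriv_pos (convex_Icc 0 τ₀) hcont.continuousOn fun x hx => ?_
          rw [interior_Icc] at hx
          exact m_deriv_pos b c d hd x (key x (ne_of_lt hx.2))
        have h2 : StrictMonoOn f (Set.Ici τ₀) := by
          refine strictMonoOn_of_deriv_pos (convex_Ici τ₀) hcont.continuousOn fun x hx => ?_
          rw [interior_Ici] at hx
          exact m_deriv_pos b c d hd x (key x (ne_of_gt hx))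
        intro s hs t ht hst
        simp only [Set.mem_Ici] at hs ht
        rcases le_total t τ₀ with h | h
        · exact h1 ⟨hs, hst.le.trans h⟩ ⟨ht, h⟩ hst
        · rcases lt_or_ge s τ₀ with h' | h'
          · rcases eq_or_lt_of_le h with rfl | hlt
            · exact h1 ⟨hs, h'.le⟩ ⟨ht, le_refl _⟩ hst
            · calc f s < f τ₀ := h1 ⟨hs, h'.le⟩ ⟨hτ.le, le_refl _⟩ h'
                _ < f t := h2 (le_refl τ₀) h hlt
          · exact h2 h' (h'.trans hst.le) hst
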